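/- Let G be a graph in which every vertex has degree at most D, and let ε > 0. Let φ : V(G) → ℝ be a finitely supported function with ℓ¹-norm 1 such that the sum over all edges (x,y) of G of |φ(x) − φ(y)| is less than ε. Then there exists a nonempty subset F of the support of φ such that |∂F| < ε·|F|, where ∂F denotes the set of edges of G with exactly one endpoint in F. -/

import Mathlib

open Filter Topology

/-- A graph sequence: finite connected graphs of uniformly bounded degree whose
number of vertices tends to infinity. -/
structure GraphSeq (V : ℕ → Type*) where
  G : ∀ n, SimpleGraph (V n)
  finite : ∀ n, Finite (V n)
  connected : ∀ n, (G n).Connected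
  degBound : ℕ
  deg_le : ∀ n, ∀ x : V n, ((G n).neighborSet x).ncard ≤ degBound
  card_tendsto : Tendsto (fun n => Nat.card (V n)) atTop atTop

/-- The edge number `e(𝒢) = liminf |E(G_n)|/|V(G_n)|`. -/
noncomputable def GraphSeq.edgeNumber {V : ℕ → Type*} (Gs : GraphSeq V) : ℝ :=
  liminf (fun n => (((Gs.G n).edgeSet.ncard : ℝ)) / (Nat.card (V n) : ℝ)) atTop

/-- Bi-Lipschitz equivalence `𝒢 ≃ ℋ` of graph sequences on the same vertex sets. -/
def GraphSeq.equivSeq {V : ℕ → Type*} (Gs Hs : GraphSeq V) : Prop :=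
  ∃ L : ℕ, 0 < L ∧ ∀ n, ∀ x y : V n,
    (Hs.G n).dist x y ≤ L * (Gs.G n).dist x y ∧
    (Gs.G n).dist x y ≤ L * (Hs.G n).dist x y

/-- The (combinatorial) cost `c(𝒢) = inf { e(ℋ) : ℋ ≃ 𝒢 }`. -/
noncomputable def GraphSeq.cost {V : ℕ → Type*} (Gs : GraphSeq V) : ℝ :=
  sInf { x : ℝ | ∃ Hs : GraphSeq V, Gs.equivSeq Hs ∧ x = Hs.edgeNumber }

/-- Coarse equivalence of graph sequences: a uniform `(A,A)`-quasi-isometry levelwise. -/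
def coarseEquiv {V W : ℕ → Type*} (Gs : GraphSeq V) (Hs : GraphSeq W) : Prop :=
  ∃ A : ℝ, 0 < A ∧ ∀ n, ∃ f : V n → W n,
    (∀ x y : V n,
      ((Gs.G n).dist x y : ℝ) / A - A ≤ ((Hs.G n).dist (f x) (f y) : ℝ) ∧
      ((Hs.G n).dist (f x) (f y) : ℝ) ≤ A * ((Gs.G n).dist x y : ℝ) + A) ∧
    (∀ w : W n, ∃ x : V n, ((Hs.G n).dist (f x) w : ℝ) ≤ A)

/-- Hyperfiniteness of a family of graphs. -/
def hyperfiniteFam {V : ℕ → Type*} (G : ∀ n, SimpleGraph (V n)) : Prop :=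
  ∀ ε : ℝ, 0 < ε → ∃ K : ℕ, 0 < K ∧ ∃ E : ∀ n, Set (Sym2 (V n)),
    (∀ n, E n ⊆ (G n).edgeSet) ∧
    limsup (fun n => (((E n).ncard : ℝ)) / (Nat.card (V n) : ℝ)) atTop < ε ∧
    ∀ n, ∀ x : V n, {y | ((G n).deleteEdges (E n)).Reachable x y}.ncard ≤ K

def GraphSeq.hyperfinite {V : ℕ → Type*} (Gs : GraphSeq V) : Prop :=
  hyperfiniteFam Gs.G

/-- Property A for a family of graphs. -/
def propertyAFam {V : ℕ → Type*} (G : ∀ n, SimpleGraph (V n)) : Prop :=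
  ∀ ε : ℝ, 0 < ε → ∃ S : ℕ, 0 < S ∧ ∀ n, ∃ ξ : V n → V n → ℝ,
    (∀ x, ∑ᶠ y, |ξ x y| = 1) ∧
    (∀ x y, ξ x y ≠ 0 → (G n).dist x y ≤ S) ∧
    (∀ x y, (G n).Adj x y → ∑ᶠ z, |ξ x z - ξ y z| < ε)

def GraphSeq.propertyA {V : ℕ → Type*} (Gs : GraphSeq V) : Prop :=
  propertyAFam Gs.G

/-- Property almost-A: one may delete a vanishing proportion of vertices to get property A. -/
def GraphSeq.almostA {V : ℕ → Type*} (Gs : GraphSeq V) : Prop :=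
  ∃ V' : ∀ n, Set (V n),
    Tendsto (fun n => (((V' n).ncard : ℝ)) / (Nat.card (V n) : ℝ)) atTop (𝓝 0) ∧
    propertyAFam (fun n => (Gs.G n).induce ((V' n)ᶜ))

/-- The set of edges of `G` with exactly one endpoint in `F`. -/
def edgeBoundary {V : Type*} (G : SimpleGraph V) (F : Set V) : Set (Sym2 V) :=
  {e | e ∈ G.edgeSet ∧ ∃ x y, e = s(x, y) ∧ x ∈ F ∧ y ∉ F}

/-- The Cayley graph of a group with respect to a set `S`. -/
def cayleyGraph (Γ : Type*) [Group Γ] (S : Set Γ) : SimpleGraph Γ :=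
  SimpleGraph.fromRel (fun x y => ∃ s ∈ S, y = x * s)

/-- The simple graph underlying an `S`-labelled graph given by label maps `lab`. -/
def labGraph {Γ V : Type*} (S : Set Γ) (lab : Γ → V → V) : SimpleGraph V :=
  SimpleGraph.fromRel (fun x y => ∃ s ∈ S, y = lab s x)

/-- Right multiplication by `s` on the right cosets of `H`. -/
def schreierMul {Γ : Type*} [Group Γ] (H : Subgroup Γ) (s : Γ) :
    Quotient (QuotientGroup.rightRel H) → Quotient (QuotientGroup.rightRel H) :=
  Quotient.map (fun g => g * s) (fun a b hab => by
    have h := (QuotientGroup.rightRel_apply).mp hab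
    exact (QuotientGroup.rightRel_apply).mpr (by
      simpa [mul_assoc] using h))

/-- The Schreier graph `Sch(Γ, H, S)` on the right cosets of `H`. -/
def schreierGraph {Γ : Type*} [Group Γ] (H : Subgroup Γ) (S : Set Γ) :
    SimpleGraph (Quotient (QuotientGroup.rightRel H)) :=
  labGraph S (fun s => schreierMul H s)

/-- The rooted labelled `r`-ball of the labelled graph `lab` at `x` is isomorphic to
the `r`-ball around the identity in `Cay(Γ, S)`. -/
def ballIso {Γ : Type*} [Group Γ] (S : Set Γ) {V : Type*} (lab : Γ → V → V)
    (x : V) (r : ℕ) : Prop :=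
  ∃ f : Γ → V, f 1 = x ∧
    (∀ g g' : Γ, (cayleyGraph Γ S).dist 1 g ≤ r → (cayleyGraph Γ S).dist 1 g' ≤ r →
      f g = f g' → g = g') ∧
    (∀ g : Γ, (cayleyGraph Γ S).dist 1 g < r → ∀ s ∈ S, f (g * s) = lab s (f g)) ∧
    (∀ v : V, (labGraph S lab).dist x v ≤ r →
      ∃ g : Γ, (cayleyGraph Γ S).dist 1 g ≤ r ∧ f g = v)

/-- Benjamini–Schramm convergence of the `S`-labelled graphs given by `lab` to `Cay(Γ, S)`. -/
def BSConv {Γ : Type*} [Group Γ] (S : Set Γ) {V : ℕ → Type*}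
    (lab : ∀ n, Γ → V n → V n) : Prop :=
  ∀ r : ℕ, Tendsto
    (fun n => ((Nat.card {x : V n // ballIso S (lab n) x r} : ℝ)) / (Nat.card (V n) : ℝ))
    atTop (𝓝 1)

/-- A sofic approximation of `Γ`: a graph sequence labelled by `S` which
Benjamini–Schramm converges to `Cay(Γ, S)`. -/
def IsSoficApprox {Γ : Type*} [Group Γ] (S : Set Γ) {V : ℕ → Type*} (Gs : GraphSeq V)
    (lab : ∀ n, Γ → V n → V n) : Prop :=
  (∀ n, Gs.G n = labGraph S (lab n)) ∧ BSConv S lab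

/-- Amenability via Følner sets with respect to the generating set `S`. -/
def FolnerAmenable {Γ : Type*} [Group Γ] (S : Set Γ) : Prop :=
  ∀ ε : ℝ, 0 < ε → ∃ F : Set Γ, F.Finite ∧ F.Nonempty ∧
    ∀ g ∈ S, ((symmDiff ((fun x => g * x) '' F) F).ncard : ℝ) < ε * (F.ncard : ℝ)

noncomputable def absDiff {V : Type} (g : V → ℝ) : Sym2 V → ℝ :=
  Sym2.lift ⟨fun x y => |g x - g y|, fun x y => abs_sub_comm (g x) (g y)⟩

@[simp] lemma absDiff_mk {V : Type} (g : V → ℝ) (x y : V) :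
    absDiff g s(x, y) = |g x - g y| := rfl

lemma absDiff_nonneg {V : Type} (g : V → ℝ) (e : Sym2 V) : 0 ≤ absDiff g e := by
  induction e using Sym2.ind with
  | _ x y => simp [abs_nonneg]

lemma mem_edgeBoundary_iff {V : Type} (G : SimpleGraph V) (F : Set V) {x y : V}
    (h : G.Adj x y) :
    s(x, y) ∈ edgeBoundary G F ↔ (x ∈ F ∧ y ∉ F) ∨ (y ∈ F ∧ x ∉ F) := by
  constructor
  · rintro ⟨-, a, b, hab, ha, hb⟩
    rw [Sym2.eq_iff] at hab
    rcases hab with ⟨rfl, rfl⟩ | ⟨rfl, rfl⟩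
    · exact Or.inl ⟨ha, hb⟩
    · exact Or.inr ⟨ha, hb⟩
  · rintro (⟨hx, hy⟩ | ⟨hy, hx⟩)
    · exact ⟨G.mem_edgeSet.mpr h, x, y, rfl, hx, hy⟩
    · exact ⟨G.mem_edgeSet.mpr h, y, x, Sym2.eq_swap.symm, hy, hx⟩

lemma key {V : Type} (G : SimpleGraph V) (ε : ℝ) (hε : 0 < ε)
    (E : Finset (Sym2 V)) (hE : ∀ e ∈ E, e ∈ G.edgeSet) :
    ∀ n : ℕ, ∀ s : Finset V, s.card ≤ n → ∀ g : V → ℝ,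
      (∀ x, 0 ≤ g x) → (∀ x, g x ≠ 0 ↔ x ∈ s) →
      (∀ e ∈ G.edgeSet, (∃ x ∈ s, x ∈ e) → e ∈ E) →
      (∀ F : Set V, F ⊆ ↑s → F.Nonempty → ε * F.ncard ≤ ((edgeBoundary G F).ncard : ℝ)) →
      ε * ∑ x ∈ s, g x ≤ ∑ e ∈ E, absDiff g e := by
  classical
  intro n
  induction n with
  | zero =>
    intro s hs g hg0 hgs hmem hF
    obtain rfl : s = ∅ := Finset.card_eq_zero.mp (Nat.le_zero.mp hs)
    simpa using Finset.sum_nonneg fun e _ => absDiff_nonneg g e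
  | succ n ih =>
    intro s hs g hg0 hgs hmem hF
    rcases Finset.eq_empty_or_nonempty s with rfl | hne
    · simpa using Finset.sum_nonneg fun e _ => absDiff_nonneg g e
    obtain ⟨x₀, hx₀s, hx₀⟩ := Finset.exists_mem_eq_inf' hne g
    set m := s.inf' hne g with hmdef
    have hmle : ∀ x ∈ s, m ≤ g x := fun x hx => Finset.inf'_le g hx
    have hmpos : 0 < m := by
      have h1 : g x₀ ≠ 0 := (hgs x₀).mpr hx₀s
      rw [hx₀]
      exact lt_of_le_of_ne (hg0 x₀) (Ne.symm h1)
    set ψ : V → ℝ := fun x => if x ∈ s then g x - m else 0 with hψdef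
    set s' : Finset V := s.filter (fun x => g x ≠ m) with hs'def
    have hs'sub : s' ⊆ s := Finset.filter_subset _ _
    have hx₀s' : x₀ ∉ s' := by simp [hs'def, hx₀.symm]
    have hcard : s'.card ≤ n := by
      have hlt : s'.card < s.card :=
        Finset.card_lt_card ((Finset.ssubset_iff_of_subset hs'sub).mpr ⟨x₀, hx₀s, hx₀s'⟩)
      omega
    have hψ0 : ∀ x, 0 ≤ ψ x := by
      intro x
      simp only [hψdef]
      split
      · exact sub_nonneg.mpr (hmle _ ‹_›)
      · exact le_refl 0
    have hψs : ∀ x, ψ x ≠ 0 ↔ x ∈ s' := by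
      intro x
      by_cases hx : x ∈ s
      · simp [hψdef, hs'def, hx, sub_ne_zero]
      · simp [hψdef, hs'def, hx]
    have hmem' : ∀ e ∈ G.edgeSet, (∃ x ∈ s', x ∈ e) → e ∈ E := by
      rintro e he ⟨x, hx, hxe⟩
      exact hmem e he ⟨x, hs'sub hx, hxe⟩
    have hF' : ∀ F : Set V, F ⊆ ↑s' → F.Nonempty →
        ε * F.ncard ≤ ((edgeBoundary G F).ncard : ℝ) := by
      intro F hFs hFne
      exact hF F (hFs.trans (Finset.coe_subset.mpr hs'sub)) hFne
    have IH := ih s' hcard ψ hψ0 hψs hmem' hF'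
    have hbE : edgeBoundary G (↑s : Set V) ⊆ ↑E := by
      rintro e ⟨he, x, y, rfl, hx, hy⟩
      exact hmem _ he ⟨x, hx, Sym2.mem_mk_left x y⟩
    have hbcard : ((edgeBoundary G (↑s : Set V)).ncard : ℝ) =
        ((E.filter (fun e => e ∈ edgeBoundary G (↑s : Set V))).card : ℝ) := by
      congr 1
      rw [← Set.ncard_coe_finset]
      congr 1
      ext e
      simp only [Finset.coe_filter, Set.mem_setOf_eq, Finset.mem_coe]
      exact ⟨fun h => ⟨hbE h, h⟩, fun h => h.2⟩
    have hedge : ∀ e ∈ E, absDiff g e =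
        absDiff ψ e + (if e ∈ edgeBoundary G (↑s : Set V) then m else 0) := by
      intro e he
      induction e using Sym2.ind with
      | _ x y =>
        have hadj : G.Adj x y := G.mem_edgeSet.mp (hE _ he)
        have hbd : s(x, y) ∈ edgeBoundary G (↑s : Set V) ↔
            (x ∈ s ∧ y ∉ s) ∨ (y ∈ s ∧ x ∉ s) := by
          rw [mem_edgeBoundary_iff G _ hadj]
          simp
        by_cases hx : x ∈ s <;> by_cases hy : y ∈ s
        · rw [absDiff_mk, absDiff_mk, if_neg (by rw [hbd]; tauto), add_zero]
          simp only [hψdef, if_pos hx, if_pos hy]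
          congr 1
          ring
        · have hgy : g y = 0 := by
            by_contra h
            exact hy ((hgs y).mp h)
          rw [absDiff_mk, absDiff_mk, if_pos (hbd.mpr (Or.inl ⟨hx, hy⟩))]
          simp only [hψdef, if_pos hx, if_neg hy, hgy, sub_zero]
          rw [abs_of_nonneg (hg0 x), abs_of_nonneg (sub_nonneg.mpr (hmle x hx))]
          ring
        · have hgx : g x = 0 := by
            by_contra h
            exact hx ((hgs x).mp h)
          rw [absDiff_mk, absDiff_mk, if_pos (hbd.mpr (Or.inr ⟨hy, hx⟩))]
          simp only [hψdef, if_pos hy, if_neg hx, hgx, zero_sub]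
          rw [abs_neg, abs_neg, abs_of_nonneg (hg0 y), abs_of_nonneg (sub_nonneg.mpr (hmle y hy))]
          ring
        · have hgx : g x = 0 := by
            by_contra h
            exact hx ((hgs x).mp h)
          have hgy : g y = 0 := by
            by_contra h
            exact hy ((hgs y).mp h)
          rw [absDiff_mk, absDiff_mk, if_neg (by rw [hbd]; tauto), add_zero]
          simp [hψdef, if_neg hx, if_neg hy, hgx, hgy]
    have hsum_g : ∑ x ∈ s, g x = ∑ x ∈ s', ψ x + m * s.card := by
      have h1 : ∑ x ∈ s', ψ x = ∑ x ∈ s, ψ x := by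
        refine Finset.sum_subset hs'sub ?_
        intro x hx hx'
        have hgm : g x = m := by
          by_contra h
          exact hx' (Finset.mem_filter.mpr ⟨hx, h⟩)
        simp [hψdef, hx, hgm]
      have h2 : ∀ x ∈ s, g x = ψ x + m := by
        intro x hx
        simp [hψdef, hx]
      rw [h1, Finset.sum_congr rfl h2, Finset.sum_add_distrib, Finset.sum_const,
        nsmul_eq_mul]
      ring
    have hmain : ∑ e ∈ E, absDiff g e =
        ∑ e ∈ E, absDiff ψ e + m * ((edgeBoundary G (↑s : Set V)).ncard : ℝ) := by
      rw [Finset.sum_congr rfl hedge, Finset.sum_add_distrib]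
      congr 1
      rw [← Finset.sum_filter, Finset.sum_const, nsmul_eq_mul, hbcard]
      ring
    have hFs : ε * (s.card : ℝ) ≤ ((edgeBoundary G (↑s : Set V)).ncard : ℝ) := by
      have := hF (↑s) subset_rfl (Finset.coe_nonempty.mpr hne)
      rwa [Set.ncard_coe_finset] at this
    calc ε * ∑ x ∈ s, g x
        = ε * ∑ x ∈ s', ψ x + m * (ε * s.card) := by rw [hsum_g]; ring
      _ ≤ ∑ e ∈ E, absDiff ψ e + m * ((edgeBoundary G (↑s : Set V)).ncard : ℝ) :=
          add_le_add IH (mul_le_mul_of_nonneg_left hFs hmpos.le)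
      _ = ∑ e ∈ E, absDiff g e := hmain.symm

/-- Willett's lemma: if `φ` is a finitely supported norm-one function on a graph of degree
at most `D` whose sum of edge differences is less than `ε`, then some nonempty subset `F`
of the support of `φ` satisfies `|∂F| < ε·|F|`. -/
theorem stmt8 {V : Type} (G : SimpleGraph V) (D : ℕ)
    (hdeg : ∀ x : V, (G.neighborSet x).ncard ≤ D)
    (ε : ℝ) (hε : 0 < ε)
    (φ : V → ℝ) (hsupp : (Function.support φ).Finite)
    (hnorm : ∑ᶠ x, |φ x| = 1)
    (hsum : ∑ᶠ e ∈ G.edgeSet,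
      Sym2.lift ⟨fun x y => |φ x - φ y|, fun x y => by simp only []; rw [abs_sub_comm]⟩ e < ε) :
    ∃ F : Set V, F ⊆ Function.support φ ∧ F.Nonempty ∧
      ((edgeBoundary G F).ncard : ℝ) < ε * (F.ncard : ℝ) := by
  classical
  have hΦne : (Function.support φ).Nonempty := by
    rcases Set.eq_empty_or_nonempty (Function.support φ) with h | h
    · exfalso
      have hz : φ = 0 := Function.support_eq_empty_iff.mp h
      rw [hz] at hnorm
      simp at hnorm
    · exact h
  by_cases hbfin : (edgeBoundary G (Function.support φ)).Finite
  · by_contra hcon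
    push_neg at hcon
    set Φ := Function.support φ with hΦ
    set g : V → ℝ := fun x => |φ x| with hg
    set s : Finset V := hsupp.toFinset with hsdef
    have hscoe : (↑s : Set V) = Φ := hsupp.coe_toFinset
    set E₀ : Set (Sym2 V) := edgeBoundary G Φ ∪ ((fun p : V × V => s(p.1, p.2)) '' (Φ ×ˢ Φ) ∩ G.edgeSet) with hE₀
    have hE₀fin : E₀.Finite :=
      hbfin.union (Set.Finite.inter_of_left ((hsupp.prod hsupp).image _) _)
    set E : Finset (Sym2 V) := hE₀fin.toFinset with hEdef
    have hkeymem : ∀ a b : V, s(a, b) ∈ G.edgeSet → a ∈ Φ → s(a, b) ∈ E₀ := by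
      intro a b he ha
      by_cases hb : b ∈ Φ
      · exact Or.inr ⟨⟨(a, b), ⟨ha, hb⟩, rfl⟩, he⟩
      · exact Or.inl ⟨he, a, b, rfl, ha, hb⟩
    have hEedge : ∀ e ∈ E, e ∈ G.edgeSet := by
      intro e he
      rw [hEdef, Set.Finite.mem_toFinset] at he
      rcases he with h | h
      · exact h.1
      · exact h.2
    have hmem : ∀ e ∈ G.edgeSet, (∃ x ∈ s, x ∈ e) → e ∈ E := by
      intro e
      induction e using Sym2.ind with
      | _ a b =>
        intro he hx
        rw [hEdef, Set.Finite.mem_toFinset]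
        rcases hx with ⟨x, hx, hxe⟩
        rw [hsdef, Set.Finite.mem_toFinset] at hx
        rcases Sym2.mem_iff.mp hxe with rfl | rfl
        · exact hkeymem _ _ he hx
        · rw [Sym2.eq_swap] at he ⊢
          exact hkeymem _ _ he hx
    have hg0 : ∀ x, 0 ≤ g x := fun x => abs_nonneg _
    have hgs : ∀ x, g x ≠ 0 ↔ x ∈ s := by
      intro x
      rw [hsdef, Set.Finite.mem_toFinset]
      exact abs_ne_zero
    have hFkey : ∀ F : Set V, F ⊆ ↑s → F.Nonempty →
        ε * F.ncard ≤ ((edgeBoundary G F).ncard : ℝ) := by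
      intro F hFs hFne
      rw [hscoe] at hFs
      exact hcon F hFs hFne
    have hkey := key G ε hε E hEedge s.card s le_rfl g hg0 hgs hmem hFkey
    have hnorm' : ∑ x ∈ s, g x = 1 := by
      rw [← hnorm]
      refine (finsum_eq_sum_of_support_subset _ ?_).symm
      intro x hx
      rw [hscoe]
      exact abs_ne_zero.mp hx
    have h2 : ∑ e ∈ E, absDiff g e ≤ ∑ e ∈ E, absDiff φ e := by
      refine Finset.sum_le_sum ?_
      intro e he
      induction e using Sym2.ind with
      | _ a b =>
        simp only [absDiff_mk, hg]
        exact abs_abs_sub_abs_le_abs_sub _ _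
    have hsum' : ∑ᶠ e ∈ G.edgeSet, absDiff φ e < ε := hsum
    have hsuppE : ∀ e ∈ G.edgeSet, absDiff φ e ≠ 0 → e ∈ E := by
      intro e
      induction e using Sym2.ind with
      | _ a b =>
        intro he hd
        rw [hEdef, Set.Finite.mem_toFinset]
        rw [absDiff_mk] at hd
        have hab : φ a ≠ φ b := fun h => hd (by rw [h, sub_self, abs_zero])
        by_cases ha : φ a = 0
        · have hb : φ b ≠ 0 := fun h => hab (ha.trans h.symm)
          rw [Sym2.eq_swap] at he ⊢
          exact hkeymem _ _ he hb
        · exact hkeymem _ _ he ha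
    have h3 : ∑ᶠ e ∈ G.edgeSet, absDiff φ e = ∑ e ∈ E, absDiff φ e := by
      refine finsum_mem_eq_sum_of_inter_support_eq _ ?_
      ext e
      simp only [Set.mem_inter_iff, Finset.mem_coe]
      constructor
      · rintro ⟨he, hd⟩
        exact ⟨hsuppE e he hd, hd⟩
      · rintro ⟨he, hd⟩
        exact ⟨hEedge e he, hd⟩
    have hfinal : ε < ε := by
      calc ε = ε * ∑ x ∈ s, g x := by rw [hnorm', mul_one]
        _ ≤ ∑ e ∈ E, absDiff g e := hkey
        _ ≤ ∑ e ∈ E, absDiff φ e := h2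
        _ = ∑ᶠ e ∈ G.edgeSet, absDiff φ e := h3.symm
        _ < ε := hsum'
    exact lt_irrefl ε hfinal
  · refine ⟨Function.support φ, subset_rfl, hΦne, ?_⟩
    have h0 : (edgeBoundary G (Function.support φ)).ncard = 0 := Set.Infinite.ncard hbfin
    rw [h0]
    have hpos : 0 < ((Function.support φ).ncard : ℝ) := by
      exact_mod_cast (Set.ncard_pos hsupp).mpr hΦne
    push_cast
    exact mul_pos hε hpos
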